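/- For all integers n ≥ c ≥ 1, every n-vertex graph G with nonrepetitive chromatic number π(G) ≤ c has at most (c−1)n − C(c,2) edges, where C(c,2) is the binomial coefficient c choose 2. -/

import Mathlib

/-- `v 0, v 1, …, v (n-1)` is a path in `G`. -/
def IsPathSeq {V : Type*} (G : SimpleGraph V) (n : ℕ) (v : ℕ → V) : Prop :=
  (∀ i, i + 1 < n → G.Adj (v i) (v (i + 1))) ∧
  (∀ i j, i < n → j < n → v i = v j → i = j)

/-- A nonrepetitive colouring of `G`. -/
def NonrepetitiveColoring {V C : Type*} (G : SimpleGraph V) (φ : V → C) : Prop :=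
  ∀ t : ℕ, 0 < t → ∀ v : ℕ → V, IsPathSeq G (2 * t) v →
    ∃ i < t, φ (v i) ≠ φ (v (t + i))

open SimpleGraph

section Aux

variable {V : Type*} {C : Type*}

lemma aux_nat_sub_one_mul (c N : ℕ) : (c - 1) * N = c * N - N := by
  cases c with
  | zero => simp
  | succ m =>
    rw [Nat.succ_sub_one, Nat.succ_mul]
    omega

lemma aux_mul_sub_one (c : ℕ) : c * (c - 1) = c * c - c := by
  cases c with
  | zero => simp
  | succ m =>
    rw [Nat.succ_sub_one, Nat.mul_succ]
    omega

lemma walk_getD_eq_getVert {G : SimpleGraph V} {u v : V} (p : G.Walk u v) :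
    ∀ i, p.support.getD i v = p.getVert i := by
  induction p with
  | nil => intro i; cases i <;> simp [Walk.getVert]
  | cons h q ih =>
    intro i
    cases i with
    | zero => simp
    | succ n => simpa using ih n

lemma cycle_getVert_inj {G : SimpleGraph V} {u : V} {w : G.Walk u u}
    (hw : w.IsCycle) {k l : ℕ} (hk : k < w.length) (hl : l < w.length)
    (h : w.getVert k = w.getVert l) : k = l := by
  have hnd : w.support.tail.Nodup := (Walk.isCycle_def _ |>.mp hw).2.2
  have hlen : w.support.tail.length = w.length := by
    have := w.length_support; simp [List.length_tail, this]
  have hget : ∀ m, m < w.length → w.support.tail.getD m u = w.getVert (m + 1) := by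
    intro m hm
    have h2 := walk_getD_eq_getVert w (m + 1)
    rw [w.support_eq_cons] at h2
    simpa using h2
  set f : ℕ → ℕ := fun m => if m = 0 then w.length - 1 else m - 1 with hf
  have hfr : ∀ m, m < w.length → f m < w.length := by
    intro m hm; by_cases h0 : m = 0 <;> simp [hf, h0] <;> omega
  have hgv : ∀ m, m < w.length → w.support.tail.getD (f m) u = w.getVert m := by
    intro m hm
    by_cases h0 : m = 0
    · subst h0
      have hf0 : f 0 = w.length - 1 := by simp [hf]
      have h1 : w.length - 1 + 1 = w.length := by omega
      rw [hf0, hget _ (by omega), h1, Walk.getVert_length, Walk.getVert_zero]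
    · have hfm : f m = m - 1 := by simp [hf, h0]
      rw [hfm, hget _ (by omega)]
      congr 1; omega
  have hkey : f k = f l := by
    have e1 := hgv k hk
    have e2 := hgv l hl
    have : w.support.tail.getD (f k) u = w.support.tail.getD (f l) u := by rw [e1, e2, h]
    have hk' : f k < w.support.tail.length := by rw [hlen]; exact hfr k hk
    have hl' : f l < w.support.tail.length := by rw [hlen]; exact hfr l hl
    rw [List.getD_eq_getElem _ _ hk', List.getD_eq_getElem _ _ hl'] at this
    exact (List.Nodup.getElem_inj_iff hnd).mp this
  simp only [hf] at hkey
  split_ifs at hkey <;> omega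

lemma isPath_concat {G : SimpleGraph V} {u v w : V} {p : G.Walk u v} (hp : p.IsPath)
    (h : G.Adj v w) (hw : w ∉ p.support) : (p.concat h).IsPath := by
  rw [← Walk.isPath_reverse_iff, Walk.reverse_concat]
  exact hp.reverse.cons (by simpa using hw)

lemma forest_bound [Fintype V] (H : SimpleGraph V) [DecidableRel H.Adj]
    (hH : H.IsAcyclic) (S : Finset V) (hS : ∀ a b, H.Adj a b → a ∈ S) :
    H.edgeFinset.card ≤ S.card - 1 := by
  classical
  rcases Finset.eq_empty_or_nonempty H.edgeFinset with hE | hE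
  · simp [hE]
  obtain ⟨a₀, b₀, hadj₀⟩ : ∃ a b, H.Adj a b := by
    obtain ⟨e, he⟩ := hE
    induction e using Sym2.ind with
    | _ a b => exact ⟨a, b, by simpa [mem_edgeFinset] using he⟩
  set root : V → V := fun x => (H.connectedComponentMk x).out with hroot
  have hroot_reach : ∀ x, H.Reachable (root x) x := by
    intro x
    exact ConnectedComponent.eq.mp (by simp [hroot, connectedComponentMk]; rfl)
  have hroot_adj : ∀ {a b}, H.Adj a b → root a = root b := by
    intro a b hab
    simp only [hroot]
    congr 1
    exact ConnectedComponent.eq.mpr hab.reachable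
  have hroot_root : ∀ x, root (root x) = root x := by
    intro x
    simp only [hroot, connectedComponentMk]
    congr 1
    exact Quot.out_eq _
  set g : V → ℕ := fun x => H.dist (root x) x with hg
  have hg_root : ∀ x, g (root x) = 0 := by
    intro x; simp [hg, hroot_root x]
  have hstep : ∀ {a b}, H.Adj a b → g a ≠ g b := by
    intro a b hab heq
    have hr : root b = root a := (hroot_adj hab).symm
    obtain ⟨p, hp, hpl⟩ := (hroot_reach a).exists_path_of_dist
    obtain ⟨q0, hq0, hql0⟩ := (hroot_reach b).exists_path_of_dist
    set q : H.Walk (root a) b := q0.copy hr rfl with hqdef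
    have hq : q.IsPath := by rw [hqdef, Walk.isPath_copy]; exact hq0
    have hql : q.length = H.dist (root b) b := by rw [hqdef, Walk.length_copy]; exact hql0
    have hglen : g a = p.length := by rw [hpl]
    have hqlen : g b = q.length := by rw [hql]
    have hans : a ∉ q.support := by
      intro hmem
      have h1 : H.dist (root a) a ≤ (q.takeUntil a hmem).length := dist_le _
      have h2 := q.take_spec hmem
      have h3 : (q.dropUntil a hmem).length ≠ 0 := by
        intro h0
        exact hab.ne (Walk.eq_of_length_eq_zero h0)
      have h4 : q.length = (q.takeUntil a hmem).length + (q.dropUntil a hmem).length := by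
        conv_lhs => rw [← h2]
        exact Walk.length_append _ _
      have : g a = H.dist (root a) a := rfl
      omega
    have hq2 : (q.concat hab.symm).IsPath := isPath_concat hq hab.symm hans
    have := hH.path_unique ⟨p, hp⟩ ⟨q.concat hab.symm, hq2⟩
    have hlen : p.length = (q.concat hab.symm).length := by
      rw [Subtype.ext_iff] at this
      exact congrArg Walk.length this
    rw [Walk.length_concat] at hlen
    omega
  have hcore : ∀ {a b v}, H.Adj a v → H.Adj b v → g a < g v → g b < g v → a = b := by
    intro a b v hav hbv hga hgb
    have hra : root a = root v := hroot_adj hav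
    have hrb : root b = root v := hroot_adj hbv
    obtain ⟨p0, hp0, hpl0⟩ := (hroot_reach a).exists_path_of_dist
    obtain ⟨q0, hq0, hql0⟩ := (hroot_reach b).exists_path_of_dist
    set p : H.Walk (root v) a := p0.copy hra rfl with hpdef
    set q : H.Walk (root v) b := q0.copy hrb rfl with hqdef
    have hp : p.IsPath := by rw [hpdef, Walk.isPath_copy]; exact hp0
    have hq : q.IsPath := by rw [hqdef, Walk.isPath_copy]; exact hq0
    have hpl : p.length = H.dist (root a) a := by rw [hpdef, Walk.length_copy]; exact hpl0
    have hql : q.length = H.dist (root b) b := by rw [hqdef, Walk.length_copy]; exact hql0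
    have hnp : v ∉ p.support := by
      intro hmem
      have h1 : H.dist (root v) v ≤ (p.takeUntil v hmem).length := dist_le _
      have h2 : (p.takeUntil v hmem).length ≤ p.length := Walk.length_takeUntil_le _ _
      have hgv : g v = H.dist (root v) v := rfl
      have hplga : p.length = g a := by rw [hpl]
      omega
    have hnq : v ∉ q.support := by
      intro hmem
      have h1 : H.dist (root v) v ≤ (q.takeUntil v hmem).length := dist_le _
      have h2 : (q.takeUntil v hmem).length ≤ q.length := Walk.length_takeUntil_le _ _
      have hgv : g v = H.dist (root v) v := rfl
      have hqlgb : q.length = g b := by rw [hql]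
      omega
    have hP1 : (p.concat hav).IsPath := isPath_concat hp hav hnp
    have hP2 : (q.concat hbv).IsPath := isPath_concat hq hbv hnq
    have hPQ : p.concat hav = q.concat hbv := by
      have := hH.path_unique ⟨p.concat hav, hP1⟩ ⟨q.concat hbv, hP2⟩
      exact Subtype.ext_iff.mp this
    have hlen : p.length = q.length := by
      have := congrArg Walk.length hPQ
      rwa [Walk.length_concat, Walk.length_concat, Nat.add_right_cancel_iff] at this
    have hgva : (p.concat hav).getVert p.length = a := by
      rw [Walk.concat_eq_append, Walk.getVert_append]
      simp
    have hgvb : (q.concat hbv).getVert q.length = b := by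
      rw [Walk.concat_eq_append, Walk.getVert_append]
      simp
    rw [← hgva, ← hgvb, hPQ, hlen]
  letI : LinearOrder V := LinearOrder.lift' (Fintype.equivFin V) (Equiv.injective _)
  set F : Sym2 V → V := Sym2.lift ⟨fun a b => if g a < g b then b else if g b < g a then a else max a b,
    by
      intro a b
      rcases lt_trichotomy (g a) (g b) with h | h | h
      · simp [h, asymm h]
      · simp [h, max_comm]
      · simp [h, asymm h]⟩ with hF
  have hFadj : ∀ {a b}, H.Adj a b → (F s(a, b) = b ∧ g a < g b) ∨ (F s(a, b) = a ∧ g b < g a) := by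
    intro a b hab
    rcases lt_or_gt_of_ne (hstep hab) with h | h
    · left; constructor
      · simp [hF, h]
      · exact h
    · right; constructor
      · simp [hF, h, asymm h]
      · exact h
  set r₀ : V := root a₀ with hr₀
  have hmemS : ∀ {x y}, H.Reachable x y → x ∈ S → y ∈ S := by
    intro x y hxy hx
    obtain ⟨wxy⟩ := hxy
    induction wxy with
    | nil => exact hx
    | cons h q ih => exact ih (hS _ _ h.symm)
  have hr₀S : r₀ ∈ S := hmemS (hroot_reach a₀).symm (hS _ _ hadj₀)
  have hgr₀ : g r₀ = 0 := hg_root a₀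
  have hmaps : ∀ e ∈ H.edgeFinset, F e ∈ S.erase r₀ := by
    intro e he
    induction e using Sym2.ind with
    | _ a b =>
      have hab : H.Adj a b := by simpa [mem_edgeFinset] using he
      rcases hFadj hab with ⟨hFe, hlt⟩ | ⟨hFe, hlt⟩ <;> rw [hFe]
      · refine Finset.mem_erase.mpr ⟨?_, hS _ _ hab.symm⟩
        intro hbr
        have : g b = 0 := by rw [hbr, hr₀]; exact hg_root a₀
        omega
      · refine Finset.mem_erase.mpr ⟨?_, hS _ _ hab⟩
        intro har
        have : g a = 0 := by rw [har, hr₀]; exact hg_root a₀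
        omega
  have hinj : Set.InjOn F H.edgeFinset := by
    intro e1 he1 e2 he2 hFe
    induction e1 using Sym2.ind with
    | _ a b =>
    induction e2 using Sym2.ind with
    | _ a' b' =>
      have hab : H.Adj a b := by simpa [mem_edgeFinset] using he1
      have hab' : H.Adj a' b' := by simpa [mem_edgeFinset] using he2
      rcases hFadj hab with ⟨h1, hl1⟩ | ⟨h1, hl1⟩ <;>
        rcases hFadj hab' with ⟨h2, hl2⟩ | ⟨h2, hl2⟩
      · rw [h1, h2] at hFe
        subst hFe
        have := hcore hab hab' hl1 hl2
        rw [this]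
      · rw [h1, h2] at hFe
        subst hFe
        have := hcore hab hab'.symm hl1 hl2
        rw [this, Sym2.eq_swap]
      · rw [h1, h2] at hFe
        subst hFe
        have := hcore hab.symm hab' hl1 hl2
        rw [this, Sym2.eq_swap]
      · rw [h1, h2] at hFe
        subst hFe
        have := hcore hab.symm hab'.symm hl1 hl2
        rw [this]
  calc H.edgeFinset.card ≤ (S.erase r₀).card :=
        Finset.card_le_card_of_injOn F hmaps hinj
    _ = S.card - 1 := Finset.card_erase_of_mem hr₀S

lemma nonrep_proper {G : SimpleGraph V} {φ : V → C} (hφ : NonrepetitiveColoring G φ)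
    {a b : V} (hab : G.Adj a b) : φ a ≠ φ b := by
  have h := hφ 1 one_pos (fun k => if k = 0 then a else b) ?_
  · obtain ⟨i, hi, hne⟩ := h
    interval_cases i
    simpa using hne
  · constructor
    · intro i hi
      have : i = 0 := by omega
      subst this
      simpa using hab
    · intro i j hi hj hij
      have hi2 : i < 2 := by omega
      have hj2 : j < 2 := by omega
      interval_cases i <;> interval_cases j <;> simp_all

lemma nonrep_update [DecidableEq V] {G : SimpleGraph V} {φ : V → C}
    (hφ : NonrepetitiveColoring G φ) {i : C} (hi : ∀ x, φ x ≠ i) (w : V) :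
    NonrepetitiveColoring G (Function.update φ w i) := by
  intro t ht v hv
  obtain ⟨p, hp, hne⟩ := hφ t ht v hv
  refine ⟨p, hp, ?_⟩
  intro heq
  set φ' := Function.update φ w i with hφ'
  rw [hφ'] at heq
  have hxy : v p ≠ v (t + p) := by
    intro h
    have := hv.2 p (t + p) (by omega) (by omega) h
    omega
  by_cases h1 : v p = w
  · by_cases h2 : v (t + p) = w
    · exact hxy (h1.trans h2.symm)
    · rw [h1] at heq
      rw [Function.update_self, Function.update_of_ne h2] at heq
      exact hi _ heq.symm
  · by_cases h2 : v (t + p) = w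
    · rw [h2] at heq
      rw [Function.update_of_ne h1, Function.update_self] at heq
      exact hi _ heq
    · rw [Function.update_of_ne h1, Function.update_of_ne h2] at heq
      exact hne heq

lemma nonrep_surjective [Fintype V] {G : SimpleGraph V} {c : ℕ}
    (hcn : c ≤ Fintype.card V) (h : ∃ φ : V → Fin c, NonrepetitiveColoring G φ) :
    ∃ φ : V → Fin c, NonrepetitiveColoring G φ ∧ Function.Surjective φ := by
  classical
  obtain ⟨φ, hφ⟩ := h
  suffices H : ∀ (k : ℕ) (φ : V → Fin c), NonrepetitiveColoring G φ →
      (Finset.univ.filter fun m : Fin c => ∀ x, φ x ≠ m).card ≤ k →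
      ∃ ψ : V → Fin c, NonrepetitiveColoring G ψ ∧ Function.Surjective ψ by
    exact H _ φ hφ le_rfl
  intro k
  induction k with
  | zero =>
    intro φ hφ hk
    refine ⟨φ, hφ, ?_⟩
    intro m
    by_contra hm
    push_neg at hm
    have : m ∈ Finset.univ.filter fun m : Fin c => ∀ x, φ x ≠ m := by
      simp only [Finset.mem_filter, Finset.mem_univ, true_and]
      intro x hx; exact hm x hx
    rw [Finset.card_eq_zero.mp (Nat.le_zero.mp hk)] at this
    simp at this
  | succ k ih =>
    intro φ hφ hk
    set U := Finset.univ.filter fun m : Fin c => ∀ x, φ x ≠ m with hU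
    rcases Finset.eq_empty_or_nonempty U with hUe | ⟨i, hiU⟩
    · refine ⟨φ, hφ, ?_⟩
      intro m
      by_contra hm
      push_neg at hm
      have : m ∈ U := by
        simp only [hU, Finset.mem_filter, Finset.mem_univ, true_and]
        intro x hx; exact hm x hx
      rw [hUe] at this; simp at this
    · have hi : ∀ x, φ x ≠ i := by
        have := Finset.mem_filter.mp hiU
        exact this.2
      have hninj : ¬ Function.Injective φ := by
        intro hinj
        have h1 : Fintype.card V ≤ Fintype.card (Fin c) - 1 := by
          have himg : Finset.univ.image φ ⊆ Finset.univ.erase i := by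
            intro m hm
            obtain ⟨x, _, rfl⟩ := Finset.mem_image.mp hm
            exact Finset.mem_erase.mpr ⟨(hi x), Finset.mem_univ _⟩
          have := Finset.card_le_card himg
          rw [Finset.card_image_of_injective _ hinj, Finset.card_erase_of_mem (Finset.mem_univ _)] at this
          simpa using this
        simp only [Fintype.card_fin] at h1
        have hcpos : 0 < c := lt_of_le_of_lt (Nat.zero_le _) i.isLt
        omega
      rw [Function.not_injective_iff] at hninj
      obtain ⟨x, y, hxy, hne⟩ := hninj
      set φ' := Function.update φ x i with hφ'
      have hφ'n : NonrepetitiveColoring G φ' := nonrep_update hφ hi x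
      refine ih φ' hφ'n ?_
      have hsub : (Finset.univ.filter fun m : Fin c => ∀ z, φ' z ≠ m) ⊆ U.erase i := by
        intro m hm
        simp only [Finset.mem_filter, Finset.mem_univ, true_and] at hm
        refine Finset.mem_erase.mpr ⟨?_, ?_⟩
        · intro hmi
          exact hm x (by rw [hφ', Function.update_self, hmi])
        · simp only [hU, Finset.mem_filter, Finset.mem_univ, true_and]
          intro z hz
          by_cases hzx : z = x
          · exact hm y (by rw [hφ', Function.update_of_ne (Ne.symm hne), ← hxy, ← hzx]; exact hz)
          · exact hm z (by rw [hφ', Function.update_of_ne hzx, hz])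
      calc (Finset.univ.filter fun m : Fin c => ∀ z, φ' z ≠ m).card
          ≤ (U.erase i).card := Finset.card_le_card hsub
        _ = U.card - 1 := Finset.card_erase_of_mem hiU
        _ ≤ k := by omega

lemma nonrep_two_color_acyclic {G H : SimpleGraph V} {φ : V → C}
    (hφ : NonrepetitiveColoring G φ) {i j : C} (hij : i ≠ j)
    (hle : ∀ a b, H.Adj a b → G.Adj a b)
    (hcol : ∀ a b, H.Adj a b → s(φ a, φ b) = s(i, j)) : H.IsAcyclic := by
  intro u w hw
  have hlen : 3 ≤ w.length := hw.three_le_length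
  set v : ℕ → V := w.getVert with hv
  have hadj : ∀ k, k < w.length → H.Adj (v k) (v (k + 1)) := fun k hk => w.adj_getVert_succ hk
  have hneq : ∀ k, k < w.length → φ (v k) ≠ φ (v (k + 1)) := by
    intro k hk he
    have := hcol _ _ (hadj k hk)
    rw [he] at this
    rw [Sym2.eq_iff] at this
    rcases this with ⟨h1, h2⟩ | ⟨h1, h2⟩
    · exact hij (h1.symm.trans h2)
    · exact hij (h1.symm.trans h2).symm
  have hmem : ∀ k, k < w.length → (φ (v k) = i ∨ φ (v k) = j) := by
    intro k hk
    have := hcol _ _ (hadj k hk)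
    rw [Sym2.eq_iff] at this
    rcases this with ⟨h1, _⟩ | ⟨h1, _⟩
    · exact Or.inl h1
    · exact Or.inr h1
  have htwo : ∀ k, k + 2 ≤ w.length → φ (v (k + 2)) = φ (v k) := by
    intro k hk
    have h1 := hneq k (by omega)
    have h2 := hneq (k + 1) (by omega)
    have m0 := hmem k (by omega)
    have m1 := hmem (k + 1) (by omega)
    have m2 : φ (v (k + 2)) = i ∨ φ (v (k + 2)) = j := by
      rcases Nat.lt_or_ge (k + 2) w.length with h | h
      · exact hmem _ h
      · have : k + 2 = w.length := by omega
        rw [this]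
        have : v w.length = v 0 := by
          rw [hv]; rw [Walk.getVert_length, Walk.getVert_zero]
        rw [this]
        exact hmem 0 (by omega)
    rcases m0 with h0 | h0 <;> rcases m1 with h1' | h1' <;> rcases m2 with h2' | h2' <;>
      simp_all
  by_cases h3 : w.length = 3
  · have hc : φ (v 2) = φ (v 0) := htwo 0 (by omega)
    have hv3 : v 3 = v 0 := by
      rw [hv, ← h3, Walk.getVert_length, Walk.getVert_zero]
    have h23 : φ (v 2) ≠ φ (v 3) := by simpa using hneq 2 (by omega)
    rw [hv3, hc] at h23
    exact h23 rfl
  · have h4 : 4 ≤ w.length := by omega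
    have hseq : IsPathSeq G (2 * 2) v := by
      constructor
      · intro k hk
        exact hle _ _ (hadj k (by omega))
      · intro k l hk hl he
        exact cycle_getVert_inj hw (by omega) (by omega) he
    obtain ⟨p, hp, hne⟩ := hφ 2 (by omega) v hseq
    interval_cases p
    · exact hne (htwo 0 (by omega)).symm
    · exact hne (htwo 1 (by omega)).symm

end Aux

/-- For all integers `n ≥ c ≥ 1`, every `n`-vertex graph `G` with `π(G) ≤ c`
has at most `(c-1)·n - C(c,2)` edges. -/
theorem edge_bound_of_nonrepetitive {V : Type*} [Fintype V] (G : SimpleGraph V)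
    [DecidableRel G.Adj] (n c : ℕ) (hn : Fintype.card V = n)
    (hc1 : 1 ≤ c) (hcn : c ≤ n)
    (h : ∃ φ : V → Fin c, NonrepetitiveColoring G φ) :
    G.edgeFinset.card ≤ (c - 1) * n - c.choose 2 := by
  classical
  subst hn
  obtain ⟨φ, hφ, hsurj⟩ := nonrep_surjective hcn h
  have hprop : ∀ {x y : V}, G.Adj x y → φ x ≠ φ y := fun hxy => nonrep_proper hφ hxy
  set a : Fin c → ℕ := fun m => (Finset.univ.filter fun x => φ x = m).card with ha
  have ha1 : ∀ m, 1 ≤ a m := by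
    intro m
    obtain ⟨x, hx⟩ := hsurj m
    exact Finset.card_pos.mpr ⟨x, by simp [ha, hx]⟩
  have hsum : ∑ m, a m = Fintype.card V := by
    rw [← Finset.card_univ]
    exact (Finset.card_eq_sum_card_fiberwise (fun x _ => Finset.mem_univ (φ x))).symm
  set t := Finset.univ.filter fun s : Sym2 (Fin c) => ¬ s.IsDiag with ht
  have hmapsto : ∀ e ∈ G.edgeFinset, Sym2.map φ e ∈ t := by
    intro e he
    induction e using Sym2.ind with
    | _ x y =>
      have hxy : G.Adj x y := by simpa [mem_edgeFinset] using he
      simp only [ht, Finset.mem_filter, Finset.mem_univ, true_and, Sym2.map_pair_eq,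
        Sym2.mk_isDiag_iff]
      exact hprop hxy
  have hcard := Finset.card_eq_sum_card_fiberwise hmapsto
  set A : Sym2 (Fin c) → ℕ := Sym2.lift ⟨fun x y => a x + a y, fun x y => add_comm _ _⟩ with hA
  have hfiber : ∀ s ∈ t, (G.edgeFinset.filter fun e => Sym2.map φ e = s).card ≤ A s - 1 := by
    intro s hs
    induction s using Sym2.ind with
    | _ i j =>
      have hij : i ≠ j := by simpa [ht, Sym2.mk_isDiag_iff] using hs
      set H : SimpleGraph V :=
        { Adj := fun x y => G.Adj x y ∧ s(φ x, φ y) = s(i, j)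
          symm := by
            refine ⟨fun x y hxy => ?_⟩
            exact ⟨hxy.1.symm, (Sym2.eq_swap).trans hxy.2⟩
          loopless := ⟨fun x hx => G.loopless.irrefl x hx.1⟩ } with hH
      letI : DecidableRel H.Adj := Classical.decRel _
      have hacyc : H.IsAcyclic :=
        nonrep_two_color_acyclic hφ hij (fun _ _ hxy => hxy.1) (fun _ _ hxy => hxy.2)
      have hsub : (G.edgeFinset.filter fun e => Sym2.map φ e = s(i, j)) ⊆ H.edgeFinset := by
        intro e he
        induction e using Sym2.ind with
        | _ x y =>
          obtain ⟨hef, hmap⟩ := Finset.mem_filter.mp he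
          have hadj : G.Adj x y := by simpa [mem_edgeFinset] using hef
          have hmap' : s(φ x, φ y) = s(i, j) := by simpa [Sym2.map_pair_eq] using hmap
          simp only [mem_edgeFinset, mem_edgeSet]
          exact ⟨hadj, hmap'⟩
      have hS : ∀ x y, H.Adj x y → x ∈ (Finset.univ.filter fun z => φ z = i ∨ φ z = j) := by
        intro x y hxy
        simp only [Finset.mem_filter, Finset.mem_univ, true_and]
        have := hxy.2
        rw [Sym2.eq_iff] at this
        rcases this with ⟨h1, _⟩ | ⟨h1, _⟩
        · exact Or.inl h1
        · exact Or.inr h1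
      have hb := forest_bound H hacyc _ hS
      have hScard : (Finset.univ.filter fun z => φ z = i ∨ φ z = j).card = a i + a j := by
        have hdisj : Disjoint (Finset.univ.filter fun z => φ z = i)
            (Finset.univ.filter fun z => φ z = j) := by
          rw [Finset.disjoint_left]
          intro x hx1 hx2
          simp only [Finset.mem_filter, Finset.mem_univ, true_and] at hx1 hx2
          exact hij (hx1.symm.trans hx2)
        rw [Finset.filter_or, Finset.card_union_of_disjoint hdisj]
      have hAij : A s(i, j) = a i + a j := by simp [hA]
      calc (G.edgeFinset.filter fun e => Sym2.map φ e = s(i, j)).card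
          ≤ H.edgeFinset.card := Finset.card_le_card hsub
        _ ≤ (Finset.univ.filter fun z => φ z = i ∨ φ z = j).card - 1 := hb
        _ = A s(i, j) - 1 := by rw [hScard, hAij]
  have hA1 : ∀ s ∈ t, 1 ≤ A s := by
    intro s _
    induction s using Sym2.ind with
    | _ i j =>
      have := ha1 i
      have hAij : A s(i, j) = a i + a j := by simp [hA]
      omega
  have hsplit : ∑ s ∈ t, (A s - 1) + t.card = ∑ s ∈ t, A s := by
    calc ∑ s ∈ t, (A s - 1) + t.card = ∑ s ∈ t, ((A s - 1) + 1) := by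
          rw [Finset.sum_add_distrib, Finset.sum_const, smul_eq_mul, mul_one]
      _ = ∑ s ∈ t, A s := Finset.sum_congr rfl fun s hs => Nat.sub_add_cancel (hA1 s hs)
  set od := (Finset.univ : Finset (Fin c)).offDiag with hod
  have hodmaps : ∀ p ∈ od, s(p.1, p.2) ∈ t := by
    intro p hp
    have := Finset.mem_offDiag.mp hp
    simp [ht, Sym2.mk_isDiag_iff, this.2.2]
  have hpairfib : ∀ (i j : Fin c), i ≠ j →
      od.filter (fun p => s(p.1, p.2) = s(i, j)) = {(i, j), (j, i)} := by
    intro i j hij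
    ext p
    simp only [Finset.mem_filter, hod, Finset.mem_offDiag, Finset.mem_univ, true_and,
      Finset.mem_insert, Finset.mem_singleton, Sym2.eq_iff]
    constructor
    · rintro ⟨hne, (⟨h1, h2⟩ | ⟨h1, h2⟩)⟩
      · left; exact Prod.ext h1 h2
      · right; exact Prod.ext h1 h2
    · rintro (rfl | rfl)
      · exact ⟨hij, Or.inl ⟨rfl, rfl⟩⟩
      · exact ⟨hij.symm, Or.inr ⟨rfl, rfl⟩⟩
  have hinner1 : ∀ s ∈ t, ∑ p ∈ od.filter (fun p => s(p.1, p.2) = s), a p.1 = A s := by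
    intro s hs
    induction s using Sym2.ind with
    | _ i j =>
      have hij : i ≠ j := by simpa [ht, Sym2.mk_isDiag_iff] using hs
      rw [hpairfib i j hij, Finset.sum_insert (by simp [Prod.ext_iff, hij]),
        Finset.sum_singleton]
      simp [hA]
  have hinner2 : ∀ s ∈ t, ∑ _p ∈ od.filter (fun p => s(p.1, p.2) = s), (1 : ℕ) = 2 := by
    intro s hs
    induction s using Sym2.ind with
    | _ i j =>
      have hij : i ≠ j := by simpa [ht, Sym2.mk_isDiag_iff] using hs
      rw [hpairfib i j hij, Finset.sum_insert (by simp [Prod.ext_iff, hij]),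
        Finset.sum_singleton]
  have hallsum : ∑ p ∈ Finset.univ ×ˢ (Finset.univ : Finset (Fin c)), a p.1
      = c * Fintype.card V := by
    rw [Finset.sum_product]
    simp only [Finset.sum_const, Finset.card_univ, Fintype.card_fin, smul_eq_mul]
    rw [← Finset.mul_sum, hsum]
  have hdiagsum : ∑ p ∈ (Finset.univ ×ˢ (Finset.univ : Finset (Fin c))).filter
      (fun p => p.1 = p.2), a p.1 = Fintype.card V := by
    have himg : (Finset.univ ×ˢ (Finset.univ : Finset (Fin c))).filter (fun p => p.1 = p.2)
        = Finset.univ.image (fun m => (m, m)) := by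
      ext p
      simp only [Finset.mem_filter, Finset.mem_product, Finset.mem_univ, true_and,
        Finset.mem_image]
      constructor
      · intro hpe
        refine ⟨p.1, ?_⟩
        exact Prod.ext rfl hpe
      · rintro ⟨m, _, rfl⟩
        rfl
    rw [himg, Finset.sum_image (fun x _ y _ hxy => (Prod.mk.inj hxy).1)]
    simpa using hsum
  have hodsum : ∑ p ∈ od, a p.1 + Fintype.card V = c * Fintype.card V := by
    rw [← hallsum, ← hdiagsum]
    have hodeq : od = (Finset.univ ×ˢ (Finset.univ : Finset (Fin c))).filter
        (fun p => ¬ p.1 = p.2) := by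
      rw [hod]
      ext p; simp
    rw [hodeq]
    have := Finset.sum_filter_add_sum_filter_not
      (Finset.univ ×ˢ (Finset.univ : Finset (Fin c))) (fun p => p.1 = p.2) (fun p => a p.1)
    omega
  have hsumA : ∑ s ∈ t, A s = (c - 1) * Fintype.card V := by
    have h1 := Finset.sum_fiberwise_of_maps_to hodmaps (fun p => a p.1)
    have h2 : ∑ s ∈ t, A s = ∑ p ∈ od, a p.1 := by
      rw [← h1]
      exact (Finset.sum_congr rfl hinner1).symm
    rw [h2, aux_nat_sub_one_mul]
    omega
  have htcard : 2 * t.card = c * c - c := by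
    have h1 := Finset.sum_fiberwise_of_maps_to hodmaps (fun _ => (1 : ℕ))
    have h2 : ∑ s ∈ t, (2 : ℕ) = ∑ p ∈ od, (1 : ℕ) := by
      rw [← h1]
      exact (Finset.sum_congr rfl hinner2).symm
    rw [Finset.sum_const, smul_eq_mul, mul_comm, Finset.sum_const, smul_eq_mul, mul_one] at h2
    rw [h2, hod, Finset.offDiag_card]
    simp
  have hchoose : c.choose 2 = t.card := by
    have h1 : c.choose 2 = c * (c - 1) / 2 := Nat.choose_two_right c
    have h2 : c * (c - 1) = c * c - c := aux_mul_sub_one c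
    omega
  calc G.edgeFinset.card
      = ∑ s ∈ t, (G.edgeFinset.filter fun e => Sym2.map φ e = s).card := hcard
    _ ≤ ∑ s ∈ t, (A s - 1) := Finset.sum_le_sum hfiber
    _ ≤ (c - 1) * Fintype.card V - c.choose 2 := by omega
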